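/- Let a, t be integers with 1 ≤ a < t. Then for every positive integer n, 2a·ex(n, K_{a,a}, K_{1,t}) ≤ n·C(t-1,a)·C(t-1,a-1), where C(m,k) denotes the binomial coefficient. -/

import Mathlib

open SimpleGraph
open Finset

/-- `F` is contained in `G` as a subgraph, i.e. there is an injective graph
homomorphism from `F` to `G`. -/
def ContainsCopy {α β : Type*} (F : SimpleGraph α) (G : SimpleGraph β) : Prop :=
  ∃ f : F →g G, Function.Injective f

/-- `N(H,G)`: the number of subgraphs of `G` isomorphic to `H`. -/
noncomputable def copyCount {α β : Type*} (H : SimpleGraph α) (G : SimpleGraph β) : ℕ :=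
  Nat.card {G' : G.Subgraph // Nonempty (H ≃g G'.coe)}

/-- `ex(n,H,F)`: the maximum number of copies of `H` in an `F`-free graph on `n` vertices. -/
noncomputable def exGen (n : ℕ) {α β : Type*} (H : SimpleGraph α) (F : SimpleGraph β) : ℕ :=
  sSup {m | ∃ G : SimpleGraph (Fin n), ¬ ContainsCopy F G ∧ m = copyCount H G}

/-- The complete bipartite graph `K_{a,b}`. -/
abbrev Kbip (a b : ℕ) : SimpleGraph (Fin a ⊕ Fin b) := completeBipartiteGraph (Fin a) (Fin b)

/-- `K̄_{a,b}`: obtained from `K_{a,b}` by adding all edges inside the part of size `a`. -/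
def KbipBar (a b : ℕ) : SimpleGraph (Fin a ⊕ Fin b) :=
  SimpleGraph.fromRel (fun u _ => u.isLeft)

/-- `k` vertex-disjoint copies of `G`. -/
def disjCopies (k : ℕ) {α : Type*} (G : SimpleGraph α) : SimpleGraph (Fin k × α) :=
  SimpleGraph.fromRel (fun u v => u.1 = v.1 ∧ G.Adj u.2 v.2)

/-- The vertex-disjoint union of `G` and `H`. -/
def disjSum {α β : Type*} (G : SimpleGraph α) (H : SimpleGraph β) : SimpleGraph (α ⊕ β) :=
  SimpleGraph.fromRel (fun u v =>
    (∃ x y, u = Sum.inl x ∧ v = Sum.inl y ∧ G.Adj x y) ∨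
    (∃ x y, u = Sum.inr x ∧ v = Sum.inr y ∧ H.Adj x y))

/-- Placing a graph `G0` on the `Fin b`-part of the vertex set `Fin a ⊕ Fin b`. -/
def liftRight (a : ℕ) {b : ℕ} (G0 : SimpleGraph (Fin b)) : SimpleGraph (Fin a ⊕ Fin b) :=
  SimpleGraph.fromRel (fun u v => ∃ x y, u = Sum.inr x ∧ v = Sum.inr y ∧ G0.Adj x y)

private lemma subgraph_finite {V : Type*} [Finite V] (G : SimpleGraph V) : Finite G.Subgraph :=
  Finite.of_injective (fun G' => (G'.verts, G'.Adj))
    (fun x y h => SimpleGraph.Subgraph.ext (congrArg Prod.fst h) (congrArg Prod.snd h))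

private lemma copy_structure {n a : ℕ} {G : SimpleGraph (Fin n)} {G' : G.Subgraph}
    (e : Kbip a a ≃g G'.coe) :
    ∃ L R : Finset (Fin n), L.card = a ∧ R.card = a ∧
      (∀ x, x ∈ G'.verts ↔ x ∈ L ∪ R) ∧
      (∀ x y, G'.Adj x y ↔ ((x ∈ L ∧ y ∈ R) ∨ (x ∈ R ∧ y ∈ L))) := by
  classical
  set L : Finset (Fin n) := Finset.univ.image (fun i : Fin a => ((e (Sum.inl i) : G'.verts) : Fin n)) with hL
  set R : Finset (Fin n) := Finset.univ.image (fun i : Fin a => ((e (Sum.inr i) : G'.verts) : Fin n)) with hR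
  have hmemL : ∀ x, x ∈ L ↔ ∃ i : Fin a, ((e (Sum.inl i) : G'.verts) : Fin n) = x := by
    intro x; simp [hL]
  have hmemR : ∀ x, x ∈ R ↔ ∃ i : Fin a, ((e (Sum.inr i) : G'.verts) : Fin n) = x := by
    intro x; simp [hR]
  have hinj : Function.Injective (fun z : Fin a ⊕ Fin a => ((e z : G'.verts) : Fin n)) := by
    intro z w h
    exact e.toEquiv.injective (Subtype.ext h)
  have hcardL : L.card = a := by
    rw [hL, Finset.card_image_of_injective _ (fun i j h => Sum.inl_injective (hinj h))]
    simp
  have hcardR : R.card = a := by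
    rw [hR, Finset.card_image_of_injective _ (fun i j h => Sum.inr_injective (hinj h))]
    simp
  have hverts : ∀ x, x ∈ G'.verts ↔ x ∈ L ∪ R := by
    intro x
    constructor
    · intro hx
      have h2 : e (e.symm ⟨x, hx⟩) = ⟨x, hx⟩ := e.toEquiv.apply_symm_apply _
      rcases hz : e.symm ⟨x, hx⟩ with i | i
      · refine Finset.mem_union_left _ ((hmemL x).2 ⟨i, ?_⟩)
        rw [← hz, h2]
      · refine Finset.mem_union_right _ ((hmemR x).2 ⟨i, ?_⟩)
        rw [← hz, h2]
    · intro hx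
      rcases Finset.mem_union.1 hx with h | h
      · obtain ⟨i, hi⟩ := (hmemL x).1 h
        rw [← hi]; exact (e (Sum.inl i)).2
      · obtain ⟨i, hi⟩ := (hmemR x).1 h
        rw [← hi]; exact (e (Sum.inr i)).2
  refine ⟨L, R, hcardL, hcardR, hverts, ?_⟩
  intro x y
  constructor
  · intro hxy
    have hx : x ∈ G'.verts := G'.edge_vert hxy
    have hy : y ∈ G'.verts := G'.edge_vert hxy.symm
    have hcoe : G'.coe.Adj ⟨x, hx⟩ ⟨y, hy⟩ := hxy
    have h2x : e (e.symm ⟨x, hx⟩) = ⟨x, hx⟩ := e.toEquiv.apply_symm_apply _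
    have h2y : e (e.symm ⟨y, hy⟩) = ⟨y, hy⟩ := e.toEquiv.apply_symm_apply _
    have hK : (Kbip a a).Adj (e.symm ⟨x, hx⟩) (e.symm ⟨y, hy⟩) := by
      rw [← e.map_adj_iff, h2x, h2y]; exact hcoe
    rcases hzx : e.symm ⟨x, hx⟩ with i | i <;> rcases hzy : e.symm ⟨y, hy⟩ with j | j <;>
        rw [hzx, hzy] at hK <;> simp at hK
    · exact Or.inl ⟨(hmemL x).2 ⟨i, by rw [← hzx, h2x]⟩, (hmemR y).2 ⟨j, by rw [← hzy, h2y]⟩⟩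
    · exact Or.inr ⟨(hmemR x).2 ⟨i, by rw [← hzx, h2x]⟩, (hmemL y).2 ⟨j, by rw [← hzy, h2y]⟩⟩
  · intro h
    have key : ∀ i j : Fin a, G'.Adj ((e (Sum.inl i) : G'.verts) : Fin n) ((e (Sum.inr j) : G'.verts) : Fin n) := by
      intro i j
      have : G'.coe.Adj (e (Sum.inl i)) (e (Sum.inr j)) := by
        rw [e.map_adj_iff]; simp
      exact this
    rcases h with ⟨hx, hy⟩ | ⟨hx, hy⟩
    · obtain ⟨i, hi⟩ := (hmemL x).1 hx
      obtain ⟨j, hj⟩ := (hmemR y).1 hy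
      rw [← hi, ← hj]; exact key i j
    · obtain ⟨i, hi⟩ := (hmemR x).1 hx
      obtain ⟨j, hj⟩ := (hmemL y).1 hy
      rw [← hi, ← hj]; exact (key j i).symm

/-- The "Good" predicate data for a copy containing `v`. -/
private def GoodPair {n : ℕ} (G : SimpleGraph (Fin n)) (G' : G.Subgraph) (v : Fin n)
    (a : ℕ) (p : Finset (Fin n) × Finset (Fin n)) : Prop :=
  p.1.card = a ∧ p.2.card = a - 1 ∧ v ∉ p.2 ∧
    (∀ u ∈ p.1, ∀ w ∈ insert v p.2, G.Adj u w) ∧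
    G'.verts = ↑(insert v p.2 ∪ p.1) ∧
    (∀ x y, G'.Adj x y ↔ ((x ∈ insert v p.2 ∧ y ∈ p.1) ∨ (x ∈ p.1 ∧ y ∈ insert v p.2)))

private lemma good_unique {n a : ℕ} {G : SimpleGraph (Fin n)} {G1 G2 : G.Subgraph}
    {v : Fin n} {p : Finset (Fin n) × Finset (Fin n)}
    (h1 : GoodPair G G1 v a p) (h2 : GoodPair G G2 v a p) : G1 = G2 := by
  apply SimpleGraph.Subgraph.ext
  · rw [h1.2.2.2.2.1, h2.2.2.2.2.1]
  · ext x y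
    rw [h1.2.2.2.2.2, h2.2.2.2.2.2]

private lemma good_exists {n a : ℕ} {G : SimpleGraph (Fin n)} {G' : G.Subgraph}
    (e : Kbip a a ≃g G'.coe) {v : Fin n} (hv : v ∈ G'.verts) :
    ∃ p, GoodPair G G' v a p := by
  obtain ⟨L, R, hcL, hcR, hverts, hadj⟩ := copy_structure e
  -- a symmetric helper
  have main : ∀ P S : Finset (Fin n), P.card = a → S.card = a →
      (∀ x, x ∈ G'.verts ↔ x ∈ P ∪ S) →
      (∀ x y, G'.Adj x y ↔ ((x ∈ P ∧ y ∈ S) ∨ (x ∈ S ∧ y ∈ P))) →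
      v ∈ P → ∃ p, GoodPair G G' v a p := by
    intro P S hcP hcS hv2 hadj2 hvP
    have hvS : v ∉ S := by
      intro hvS
      exact G.loopless.irrefl v (G'.adj_sub ((hadj2 v v).2 (Or.inl ⟨hvP, hvS⟩)))
    have hins : insert v (P.erase v) = P := Finset.insert_erase hvP
    refine ⟨(S, P.erase v), hcS, by rw [Finset.card_erase_of_mem hvP, hcP],
      Finset.notMem_erase _ _, ?_, ?_, ?_⟩
    · intro u hu w hw
      rw [hins] at hw
      exact G'.adj_sub ((hadj2 u w).2 (Or.inr ⟨hu, hw⟩))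
    · rw [hins]
      ext x
      rw [hv2 x]
      simp [Finset.union_comm]
    · intro x y
      rw [hins]
      exact hadj2 x y
  have hvLR := (hverts v).1 hv
  rcases Finset.mem_union.1 hvLR with h | h
  · exact main L R hcL hcR hverts hadj h
  · refine main R L hcR hcL (fun x => by rw [hverts x, Finset.union_comm])
      (fun x y => by rw [hadj x y]; tauto) h

private lemma degree_bound {n t : ℕ} {G : SimpleGraph (Fin n)}
    (hF : ¬ ContainsCopy (Kbip 1 t) G) (v : Fin n) :
    ((G.neighborSet v).toFinite.toFinset).card < t := by
  by_contra h
  push_neg at h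
  obtain ⟨s, hs, hcard⟩ := Finset.exists_subset_card_eq h
  apply hF
  set g : Fin t → Fin n := fun i => ((s.equivFin.symm (Fin.cast hcard.symm i) : s) : Fin n) with hg
  have hgmem : ∀ i, G.Adj v (g i) := by
    intro i
    have : g i ∈ (G.neighborSet v).toFinite.toFinset := hs (s.equivFin.symm (Fin.cast hcard.symm i)).2
    simpa using this
  have hginj : Function.Injective g := by
    intro i j hij
    have := Subtype.ext hij
    have := s.equivFin.symm.injective this
    simpa using this
  refine ⟨⟨Sum.elim (fun _ => v) g, ?_⟩, ?_⟩
  · rintro (x | x) (y | y) hxy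
    · simp at hxy
    · exact hgmem y
    · exact (hgmem x).symm
    · simp at hxy
  · show Function.Injective (Sum.elim (fun _ => v) g)
    rintro (x | x) (y | y) hxy <;> simp only [Sum.elim_inl, Sum.elim_inr] at hxy
    · exact congrArg Sum.inl (Subsingleton.elim x y)
    · exact absurd hxy (G.ne_of_adj (hgmem y))
    · exact absurd hxy.symm (G.ne_of_adj (hgmem x))
    · exact congrArg Sum.inr (hginj hxy)

private lemma per_graph {a t n : ℕ} (ha : 1 ≤ a) (hat : a < t) (G : SimpleGraph (Fin n))
    (hF : ¬ ContainsCopy (Kbip 1 t) G) :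
    2 * a * _root_.copyCount (Kbip a a) G ≤ n * (Nat.choose (t-1) a * Nat.choose (t-1) (a-1)) := by
  classical
  haveI : Finite G.Subgraph := subgraph_finite G
  set K := {G' : G.Subgraph // Nonempty (Kbip a a ≃g G'.coe)} with hK
  haveI : Fintype K := Fintype.ofFinite _
  set N : Fin n → Finset (Fin n) := fun v => (G.neighborSet v).toFinite.toFinset with hN
  have hNmem : ∀ v u : Fin n, u ∈ N v ↔ G.Adj v u := by
    intro v u; simp [hN]
  have hdeg : ∀ v, (N v).card ≤ t - 1 := fun v => Nat.le_sub_one_of_lt (degree_bound hF v)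
  set B := Nat.choose (t-1) a * Nat.choose (t-1) (a-1) with hB
  -- per-vertex bound
  have hver : ∀ v : Fin n,
      (Finset.univ.filter (fun G' : K => v ∈ G'.val.verts)).card ≤ B := by
    intro v
    set uu : Finset (Fin n) → Fin n := fun S => if h : S.Nonempty then S.min' h else v with huu
    set Tv : Finset (Finset (Fin n) × Finset (Fin n)) :=
      ((N v).powersetCard a).biUnion
        (fun S => ({S} : Finset (Finset (Fin n))) ×ˢ ((N (uu S)).powersetCard (a-1))) with hTv
    set Φ : K → Finset (Fin n) × Finset (Fin n) :=
      fun G' => if h : v ∈ G'.val.verts then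
        Classical.choose (good_exists (Classical.choice G'.2) h) else (∅, ∅) with hΦ
    have hΦgood : ∀ (G' : K), v ∈ G'.val.verts → GoodPair G G'.val v a (Φ G') := by
      intro G' h
      rw [hΦ]
      simp only [dif_pos h]
      exact Classical.choose_spec (good_exists (Classical.choice G'.2) h)
    have hmaps : ∀ G' : K, v ∈ G'.val.verts → Φ G' ∈ Tv := by
      intro G' h
      obtain ⟨hS, hT, hvT, hadj, hverts, hchar⟩ := hΦgood G' h
      have hSne : (Φ G').1.Nonempty := Finset.card_pos.1 (by rw [hS]; exact ha)
      have huuS : uu (Φ G').1 ∈ (Φ G').1 := by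
        rw [huu]; simp only [dif_pos hSne]; exact Finset.min'_mem _ _
      rw [hTv]
      refine Finset.mem_biUnion.2 ⟨(Φ G').1, ?_, ?_⟩
      · refine Finset.mem_powersetCard.2 ⟨?_, hS⟩
        intro u hu
        exact (hNmem v u).2 (hadj u hu v (Finset.mem_insert_self _ _)).symm
      · refine Finset.mem_product.2 ⟨Finset.mem_singleton_self _, ?_⟩
        refine Finset.mem_powersetCard.2 ⟨?_, hT⟩
        intro w hw
        exact (hNmem _ w).2 (hadj _ huuS w (Finset.mem_insert_of_mem hw))
    have hinj : Set.InjOn Φ (Finset.univ.filter (fun G' : K => v ∈ G'.val.verts)) := by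
      intro G1 h1 G2 h2 heq
      have h1' : v ∈ G1.val.verts := by simpa using h1
      have h2' : v ∈ G2.val.verts := by simpa using h2
      exact Subtype.ext (good_unique (hΦgood G1 h1') (heq ▸ hΦgood G2 h2'))
    have hcardTv : Tv.card ≤ B := by
      calc Tv.card ≤ ∑ S ∈ (N v).powersetCard a,
            (({S} : Finset (Finset (Fin n))) ×ˢ ((N (uu S)).powersetCard (a-1))).card :=
            Finset.card_biUnion_le
        _ = ∑ S ∈ (N v).powersetCard a, ((N (uu S)).powersetCard (a-1)).card := by
            simp [Finset.card_product]
        _ ≤ ∑ S ∈ (N v).powersetCard a, Nat.choose (t-1) (a-1) := by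
            refine Finset.sum_le_sum fun S _ => ?_
            rw [Finset.card_powersetCard]
            exact Nat.choose_le_choose _ (hdeg (uu S))
        _ = ((N v).powersetCard a).card * Nat.choose (t-1) (a-1) := by
            rw [Finset.sum_const, smul_eq_mul]
        _ ≤ B := by
            rw [hB, Finset.card_powersetCard]
            exact Nat.mul_le_mul_right _ (Nat.choose_le_choose _ (hdeg v))
    calc (Finset.univ.filter (fun G' : K => v ∈ G'.val.verts)).card ≤ Tv.card := by
          refine Finset.card_le_card_of_injOn Φ ?_ hinj
          intro G' hG'
          exact hmaps G' (by simpa using hG')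
      _ ≤ B := hcardTv
  -- each copy has 2a vertices
  have h2a : ∀ G' : K, (Finset.univ.filter (fun w : Fin n => w ∈ G'.val.verts)).card = 2 * a := by
    intro G'
    have e := Classical.choice G'.2
    have : Fintype.card G'.val.verts = 2 * a := by
      rw [← Fintype.card_congr e.toEquiv]
      simp [two_mul]
    rw [← this]
    rw [Fintype.card_subtype]
  -- double counting
  have hcc : _root_.copyCount (Kbip a a) G = Fintype.card K := by
    rw [_root_.copyCount, Nat.card_eq_fintype_card]
  calc 2 * a * _root_.copyCount (Kbip a a) G
      = ∑ _G' : K, 2 * a := by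
        rw [hcc, Finset.sum_const, Finset.card_univ, smul_eq_mul, mul_comm]
    _ = ∑ G' : K, (Finset.univ.filter (fun w : Fin n => w ∈ G'.val.verts)).card :=
        (Finset.sum_congr rfl fun G' _ => (h2a G').symm)
    _ = ∑ G' : K, ∑ w : Fin n, if w ∈ G'.val.verts then 1 else 0 :=
        Finset.sum_congr rfl fun G' _ => Finset.card_filter _ _
    _ = ∑ w : Fin n, ∑ G' : K, if w ∈ G'.val.verts then 1 else 0 := Finset.sum_comm
    _ = ∑ w : Fin n, (Finset.univ.filter (fun G' : K => w ∈ G'.val.verts)).card :=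
        Finset.sum_congr rfl fun w _ => (Finset.card_filter _ _).symm
    _ ≤ ∑ _w : Fin n, B := Finset.sum_le_sum fun w _ => hver w
    _ = n * B := by
        rw [Finset.sum_const, Finset.card_univ, Fintype.card_fin, smul_eq_mul]

/-- if `1 ≤ a < t`, then for every positive `n`,
`2a·ex(n, K_{a,a}, K_{1,t}) ≤ n·C(t-1,a)·C(t-1,a-1)`. -/
theorem stmt11 (a t : ℕ) (ha : 1 ≤ a) (hat : a < t) (n : ℕ) (hn : 0 < n) :
    2 * a * exGen n (Kbip a a) (Kbip 1 t) ≤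
      n * (Nat.choose (t - 1) a * Nat.choose (t - 1) (a - 1)) := by
  classical
  set B := Nat.choose (t-1) a * Nat.choose (t-1) (a-1) with hB
  set S := {m | ∃ G : SimpleGraph (Fin n), ¬ ContainsCopy (Kbip 1 t) G ∧ m = _root_.copyCount (Kbip a a) G} with hS
  have hbot : ¬ ContainsCopy (Kbip 1 t) (⊥ : SimpleGraph (Fin n)) := by
    rintro ⟨f, -⟩
    have hadj : (Kbip 1 t).Adj (Sum.inl 0) (Sum.inr ⟨0, by omega⟩) := by simp
    exact f.map_adj hadj
  have hne : _root_.copyCount (Kbip a a) (⊥ : SimpleGraph (Fin n)) ∈ S := ⟨⊥, hbot, rfl⟩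
  have hbdd : ∀ m ∈ S, 2 * a * m ≤ n * B := by
    rintro m ⟨G, hG, rfl⟩
    exact per_graph ha hat G hG
  have hBdd : BddAbove S := ⟨n * B, fun m hm =>
    le_trans (Nat.le_mul_of_pos_left m (by omega)) (hbdd m hm)⟩
  have hmem : sSup S ∈ S := Nat.sSup_mem ⟨_, hne⟩ hBdd
  have : exGen n (Kbip a a) (Kbip 1 t) = sSup S := rfl
  rw [this]
  exact hbdd _ hmem
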